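/- Let n ≥ 3 and let C_n be the cycle graph on n vertices (the simple graph on ZMod n in which i is adjacent to i+1 and i−1). Then the spanning forests of C_n are exactly the subsets of E(C_n) obtained by removing a single edge, so that Ψ_{C_n} = ∑_{e ∈ E(C_n)} x_e; consequently, for any field k, the complement of the affine graph hypersurface, {t : E(C_n) → k | ∑_e t_e ≠ 0}, is in bijection with k^{n−1} × kˣ. (This realizes the identity U(Γ) = [𝔸^n] − [𝔸^{n−1}] for an n-sided polygon.) -/

import Mathlib

open scoped Classical
noncomputable section

open MvPolynomial

/-- A spanning forest of a simple graph `G`: a subset of the edge set that is maximal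
among subsets of the edge set whose associated spanning subgraph is acyclic. -/
def SimpleGraph.IsSpanningForest {V : Type*} (G : SimpleGraph V) (T : Set (Sym2 V)) : Prop :=
  T ⊆ G.edgeSet ∧ (SimpleGraph.fromEdgeSet T).IsAcyclic ∧
    ∀ T' : Set (Sym2 V), T ⊆ T' → T' ⊆ G.edgeSet →
      (SimpleGraph.fromEdgeSet T').IsAcyclic → T' = T

/-- The Kirchhoff–Symanzik polynomial of a finite simple graph `G`:
`Ψ_G = ∑_T ∏_{e ∉ T} x_e`, the sum over spanning forests `T` of `G`. -/
def SimpleGraph.kirchhoff {V : Type*} [Fintype V] (G : SimpleGraph V) :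
    MvPolynomial G.edgeSet ℤ :=
  ∑ T ∈ Finset.univ.filter (fun T : Finset (Sym2 V) => G.IsSpanningForest ↑T),
    ∏ e ∈ Finset.univ.filter (fun e : G.edgeSet => (e : Sym2 V) ∉ T), X e

/-- The affine graph hypersurface `X̂_G ⊆ k^{E(G)}`. -/
def SimpleGraph.graphHypersurface {V : Type*} [Fintype V] (G : SimpleGraph V)
    (k : Type*) [CommRing k] : Set (G.edgeSet → k) :=
  {t | (MvPolynomial.aeval t) G.kirchhoff = 0}

/-- The complement `k^{E(G)} ∖ X̂_G` of the affine graph hypersurface. -/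
def SimpleGraph.graphHypersurfaceComplement {V : Type*} [Fintype V] (G : SimpleGraph V)
    (k : Type*) [CommRing k] : Set (G.edgeSet → k) :=
  {t | (MvPolynomial.aeval t) G.kirchhoff ≠ 0}

/-- The disjoint union of two simple graphs. -/
def SimpleGraph.disjUnion {V₁ V₂ : Type*} (G₁ : SimpleGraph V₁) (G₂ : SimpleGraph V₂) :
    SimpleGraph (V₁ ⊕ V₂) where
  Adj x y := (∃ a b, x = Sum.inl a ∧ y = Sum.inl b ∧ G₁.Adj a b) ∨
             (∃ a b, x = Sum.inr a ∧ y = Sum.inr b ∧ G₂.Adj a b)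
  symm := by
    constructor
    rintro x y (⟨a, b, rfl, rfl, h⟩ | ⟨a, b, rfl, rfl, h⟩)
    · exact Or.inl ⟨b, a, rfl, rfl, h.symm⟩
    · exact Or.inr ⟨b, a, rfl, rfl, h.symm⟩
  loopless := by
    constructor
    rintro x (⟨a, b, rfl, hab, h⟩ | ⟨a, b, rfl, hab, h⟩) <;>
      · cases hab
        exact (h.ne rfl).elim

lemma SimpleGraph.disjUnion_mem_inl {V₁ V₂ : Type*} {G₁ : SimpleGraph V₁}
    {G₂ : SimpleGraph V₂} {e : Sym2 V₁} (he : e ∈ G₁.edgeSet) :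
    e.map Sum.inl ∈ (G₁.disjUnion G₂).edgeSet := by
  induction e using Sym2.ind with
  | _ a b => exact Or.inl ⟨a, b, rfl, rfl, he⟩

lemma SimpleGraph.disjUnion_mem_inr {V₁ V₂ : Type*} {G₁ : SimpleGraph V₁}
    {G₂ : SimpleGraph V₂} {e : Sym2 V₂} (he : e ∈ G₂.edgeSet) :
    e.map Sum.inr ∈ (G₁.disjUnion G₂).edgeSet := by
  induction e using Sym2.ind with
  | _ a b => exact Or.inr ⟨a, b, rfl, rfl, he⟩

/-- The canonical inclusion `E(G₁) ↪ E(G₁ ⊔ G₂)`. -/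
def SimpleGraph.disjUnionEdgeInl {V₁ V₂ : Type*} (G₁ : SimpleGraph V₁) (G₂ : SimpleGraph V₂) :
    G₁.edgeSet → (G₁.disjUnion G₂).edgeSet :=
  fun e => ⟨(e : Sym2 V₁).map Sum.inl, SimpleGraph.disjUnion_mem_inl e.2⟩

/-- The canonical inclusion `E(G₂) ↪ E(G₁ ⊔ G₂)`. -/
def SimpleGraph.disjUnionEdgeInr {V₁ V₂ : Type*} (G₁ : SimpleGraph V₁) (G₂ : SimpleGraph V₂) :
    G₂.edgeSet → (G₁.disjUnion G₂).edgeSet :=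
  fun e => ⟨(e : Sym2 V₂).map Sum.inr, SimpleGraph.disjUnion_mem_inr e.2⟩

/-- The cycle graph on `ZMod n`: `i` is adjacent to `i + 1` and `i - 1`. -/
def cycleGraphZMod (n : ℕ) : SimpleGraph (ZMod n) where
  Adj i j := i ≠ j ∧ (j = i + 1 ∨ i = j + 1)
  symm := by
    constructor
    rintro i j ⟨hne, h | h⟩
    · exact ⟨hne.symm, Or.inr h⟩
    · exact ⟨hne.symm, Or.inl h⟩
  loopless := ⟨fun i h => h.1 rfl⟩


section CycleHelpers

set_option linter.unusedSectionVars false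
set_option linter.unusedVariables false

variable {n : ℕ} [NeZero n]

lemma my_natCast_ne_zero {m : ℕ} (h0 : 0 < m) (h1 : m < n) : (m : ZMod n) ≠ 0 :=
  fun h => absurd (Nat.le_of_dvd h0 ((ZMod.natCast_eq_zero_iff m n).mp h))
    (not_le.mpr h1)

lemma my_one_ne_zero (hn : 3 ≤ n) : (1 : ZMod n) ≠ 0 := by
  simpa using my_natCast_ne_zero (n := n) one_pos (by omega)

lemma my_two_ne_zero (hn : 3 ≤ n) : (2 : ZMod n) ≠ 0 := by
  simpa using my_natCast_ne_zero (n := n) (m := 2) two_pos (by omega)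

lemma cyc_edge_mem (hn : 3 ≤ n) (i : ZMod n) :
    s(i, i + 1) ∈ (cycleGraphZMod n).edgeSet := by
  rw [SimpleGraph.mem_edgeSet]
  refine ⟨fun h => my_one_ne_zero hn (by linear_combination -h), Or.inl rfl⟩

lemma cyc_edge_form (hn : 3 ≤ n) {e : Sym2 (ZMod n)} (he : e ∈ (cycleGraphZMod n).edgeSet) :
    ∃ i, e = s(i, i + 1) := by
  induction e using Sym2.ind with
  | _ a b =>
    rw [SimpleGraph.mem_edgeSet] at he
    obtain ⟨hne, h | h⟩ := he
    · exact ⟨a, by rw [show b = a + 1 from h]⟩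
    · exact ⟨b, by rw [show a = b + 1 from h, Sym2.eq_swap]⟩

lemma cyc_edge_inj (hn : 3 ≤ n) {i j : ZMod n} (h : s(i, i + 1) = s(j, j + 1)) : i = j := by
  rw [Sym2.eq_iff] at h
  rcases h with ⟨h, -⟩ | ⟨h1, h2⟩
  · exact h
  · exact absurd (by linear_combination h2 - h1) (my_two_ne_zero hn)

/-- invariance of a set under reachability -/
lemma reach_invariant {V : Type*} {H : SimpleGraph V} {S : Set V}
    (hS : ∀ u v, H.Adj u v → (u ∈ S ↔ v ∈ S)) {u v : V} (h : H.Reachable u v) :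
    u ∈ S ↔ v ∈ S := by
  obtain ⟨p⟩ := h
  induction p with
  | nil => rfl
  | cons hadj p ih => exact (hS _ _ hadj).trans ih
lemma val_lt_pred (hn : 3 ≤ n) {x : ZMod n} (hx : x ≠ -1) : x.val < n - 1 := by
  have h1 : x.val < n := ZMod.val_lt x
  rcases Nat.lt_or_ge x.val (n - 1) with h | h
  · exact h
  · exfalso
    apply hx
    have hv : x.val = n - 1 := by omega
    calc x = ((x.val : ℕ) : ZMod n) := (ZMod.natCast_rightInverse x).symm
    _ = ((n - 1 : ℕ) : ZMod n) := by rw [hv]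
    _ = -1 := by
        rw [Nat.cast_sub (by omega), Nat.cast_one, ZMod.natCast_self, zero_sub]

lemma fsucc (hn : 3 ≤ n) {x : ZMod n} (hx : x ≠ -1) : (x + 1).val = x.val + 1 := by
  haveI : Fact (1 < n) := ⟨by omega⟩
  have h := val_lt_pred hn hx
  rw [ZMod.val_add_of_lt (by rw [ZMod.val_one]; omega), ZMod.val_one]

lemma pathAdj (hn : 3 ≤ n) {a u v : ZMod n}
    (h : (SimpleGraph.fromEdgeSet ((cycleGraphZMod n).edgeSet \ {s(a, a + 1)})).Adj u v) :
    s(u, v) ≠ s(a, a + 1) ∧ ((v = u + 1 ∧ u ≠ a) ∨ (u = v + 1 ∧ v ≠ a)) := by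
  rw [SimpleGraph.fromEdgeSet_adj] at h
  obtain ⟨⟨hmem, hne_e⟩, hne⟩ := h
  rw [Set.mem_singleton_iff] at hne_e
  refine ⟨hne_e, ?_⟩
  rw [SimpleGraph.mem_edgeSet] at hmem
  obtain ⟨-, h | h⟩ := hmem
  · exact Or.inl ⟨h, fun hua => hne_e (by rw [show v = u + 1 from h, hua])⟩
  · exact Or.inr ⟨h, fun hva => hne_e (by rw [show u = v + 1 from h, hva, Sym2.eq_swap])⟩
lemma path_acyclic (hn : 3 ≤ n) (a : ZMod n) :
    (SimpleGraph.fromEdgeSet ((cycleGraphZMod n).edgeSet \ {s(a, a + 1)})).IsAcyclic := by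
  set P := SimpleGraph.fromEdgeSet ((cycleGraphZMod n).edgeSet \ {s(a, a + 1)}) with hP
  -- key: every adjacent pair u, u+1 with u ≠ a gives a bridge
  have key : ∀ u : ZMod n, u ≠ a → P.Adj u (u + 1) → P.IsBridge s(u, u + 1) := by
    intro u hua hadj
    rw [SimpleGraph.isBridge_iff]
    refine fun hr => ?_
    set f : ZMod n → ℕ := fun w => (w - (a + 1)).val with hf
    have fne : ∀ x : ZMod n, x ≠ a → x - (a + 1) ≠ -1 := by
      intro x hx h
      exact hx (by linear_combination h)
    have fstep : ∀ x : ZMod n, x ≠ a → f (x + 1) = f x + 1 := by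
      intro x hx
      have : x + 1 - (a + 1) = (x - (a + 1)) + 1 := by ring
      rw [hf]
      simp only
      rw [this, fsucc hn (fne x hx)]
    have finj : ∀ x y : ZMod n, f x = f y → x = y := by
      intro x y h
      have := ZMod.val_injective n h
      exact by linear_combination this
    have hinv := reach_invariant (H := P \ SimpleGraph.fromEdgeSet {s(u, u + 1)})
      (S := {w | f w ≤ f u}) ?_ hr
    · have h1 : f (u + 1) = f u + 1 := fstep u hua
      have h2 : (u : ZMod n) ∈ {w | f w ≤ f u} := Set.mem_setOf_eq ▸ le_refl (f u)
      have h3 := hinv.mp h2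
      simp only [Set.mem_setOf_eq, h1] at h3
      omega
    · intro x y hxy
      rw [SimpleGraph.sdiff_adj] at hxy
      obtain ⟨hPxy, hnot⟩ := hxy
      have hne : x ≠ y := hPxy.ne
      have hnee : s(x, y) ≠ s(u, u + 1) := by
        intro h
        exact hnot (by rw [SimpleGraph.fromEdgeSet_adj]; exact ⟨by rw [h]; rfl, hne⟩)
      obtain ⟨-, hcase⟩ := pathAdj hn hPxy
      simp only [Set.mem_setOf_eq]
      rcases hcase with ⟨hyx, hxa⟩ | ⟨hxy', hya⟩
      · have hy : f y = f x + 1 := by rw [hyx]; exact fstep x hxa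
        have hxu : f x ≠ f u := fun h => hnee (by rw [finj x u h, hyx, finj x u h])
        omega
      · have hx : f x = f y + 1 := by rw [hxy']; exact fstep y hya
        have hyu : f y ≠ f u := fun h => by
          apply hnee
          rw [finj y u h] at hxy' ⊢
          rw [hxy', Sym2.eq_swap]
        omega
  -- now conclude
  rw [SimpleGraph.isAcyclic_iff_forall_adj_isBridge]
  intro v w hvw
  obtain ⟨-, hcase⟩ := pathAdj hn hvw
  rcases hcase with ⟨hwv, hva⟩ | ⟨hvw', hwa⟩
  · rw [show w = v + 1 from hwv] at hvw ⊢
    exact key v hva hvw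
  · rw [show v = w + 1 from hvw'] at hvw ⊢
    rw [Sym2.eq_swap]
    exact key w hwa hvw.symm
lemma cyc_conn (hn : 3 ≤ n) {S : Set (Sym2 (ZMod n))} (a : ZMod n)
    (hS : ∀ i : ZMod n, i ≠ a → s(i, i + 1) ∈ S) :
    (SimpleGraph.fromEdgeSet S).Connected := by
  set H := SimpleGraph.fromEdgeSet S with hH
  have hadj : ∀ i : ZMod n, i ≠ a → H.Adj i (i + 1) := by
    intro i hi
    rw [hH, SimpleGraph.fromEdgeSet_adj]
    exact ⟨hS i hi, fun h => my_one_ne_zero hn (by linear_combination -h)⟩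
  have claim : ∀ m : ℕ, m < n → H.Reachable (a + 1) (a + 1 + (m : ZMod n)) := by
    intro m
    induction m with
    | zero =>
      intro _
      rw [Nat.cast_zero, add_zero]
    | succ m ih =>
      intro hm
      have h1 := ih (by omega)
      have hne : a + 1 + (m : ZMod n) ≠ a := by
        intro h
        exact my_natCast_ne_zero (n := n) (m := m + 1) (by omega) hm
          (by push_cast; linear_combination h)
      have h2 := hadj _ hne
      have : a + 1 + ((m + 1 : ℕ) : ZMod n) = a + 1 + (m : ZMod n) + 1 := by push_cast; ring
      rw [this]
      exact h1.trans h2.reachable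
  have reach : ∀ v : ZMod n, H.Reachable (a + 1) v := by
    intro v
    have := claim (v - (a + 1)).val (ZMod.val_lt _)
    rwa [ZMod.natCast_rightInverse _, add_sub_cancel] at this
  exact ⟨fun u v => (reach u).symm.trans (reach v)⟩

lemma cyc_card (hn : 3 ≤ n) : Fintype.card (cycleGraphZMod n).edgeSet = n := by
  have hb : Function.Bijective
      (fun i : ZMod n => (⟨s(i, i + 1), cyc_edge_mem hn i⟩ : (cycleGraphZMod n).edgeSet)) := by
    constructor
    · intro i j h
      exact cyc_edge_inj hn (congrArg Subtype.val h)
    · rintro ⟨e, he⟩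
      obtain ⟨i, rfl⟩ := cyc_edge_form hn he
      exact ⟨i, rfl⟩
  rw [← Fintype.card_congr (Equiv.ofBijective _ hb), ZMod.card]

lemma cyc_not_acyclic (hn : 3 ≤ n) : ¬ (cycleGraphZMod n).IsAcyclic := by
  intro h
  have hconn : (cycleGraphZMod n).Connected := by
    have := cyc_conn hn (S := (cycleGraphZMod n).edgeSet) 0
      (fun i _ => cyc_edge_mem hn i)
    rwa [SimpleGraph.fromEdgeSet_edgeSet] at this
  have htree : (cycleGraphZMod n).IsTree := ⟨hconn, h⟩
  have hc := htree.card_edgeFinset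
  rw [SimpleGraph.edgeFinset, Set.toFinset_card, cyc_card hn, ZMod.card] at hc
  omega
lemma my_acyclic_mono {V : Type*} {H G : SimpleGraph V} (h : H ≤ G) (hG : G.IsAcyclic) :
    H.IsAcyclic := fun _ c hc => hG (c.mapLe h) (hc.mapLe h)

lemma forest_iff (hn : 3 ≤ n) (T : Set (Sym2 (ZMod n))) :
    (cycleGraphZMod n).IsSpanningForest T ↔
      ∃ e ∈ (cycleGraphZMod n).edgeSet, T = (cycleGraphZMod n).edgeSet \ {e} := by
  constructor
  · rintro ⟨hTE, hacyc, hmax⟩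
    have hne : T ≠ (cycleGraphZMod n).edgeSet := by
      rintro rfl
      rw [SimpleGraph.fromEdgeSet_edgeSet] at hacyc
      exact cyc_not_acyclic hn hacyc
    obtain ⟨e, heE, heT⟩ : ∃ e ∈ (cycleGraphZMod n).edgeSet, e ∉ T := by
      by_contra hc
      push_neg at hc
      exact hne (Set.Subset.antisymm hTE hc)
    obtain ⟨a, rfl⟩ := cyc_edge_form hn heE
    refine ⟨_, heE, ?_⟩
    exact (hmax _ (Set.subset_diff_singleton hTE heT) Set.diff_subset
      (path_acyclic hn a)).symm
  · rintro ⟨e, heE, rfl⟩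
    obtain ⟨a, rfl⟩ := cyc_edge_form hn heE
    refine ⟨Set.diff_subset, path_acyclic hn a, ?_⟩
    intro T' hsub hTE' hacyc'
    by_cases he : s(a, a + 1) ∈ T'
    · exfalso
      have : T' = (cycleGraphZMod n).edgeSet := by
        refine Set.Subset.antisymm hTE' (fun x hx => ?_)
        by_cases hxe : x = s(a, a + 1)
        · rwa [hxe]
        · exact hsub ⟨hx, hxe⟩
      rw [this, SimpleGraph.fromEdgeSet_edgeSet] at hacyc'
      exact cyc_not_acyclic hn hacyc'
    · exact Set.Subset.antisymm (Set.subset_diff_singleton hTE' he) hsub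
open MvPolynomial in
lemma cyc_kirchhoff (hn : 3 ≤ n) :
    (cycleGraphZMod n).kirchhoff = ∑ e : (cycleGraphZMod n).edgeSet, MvPolynomial.X e := by
  set G := cycleGraphZMod n with hG
  have himg : Finset.univ.filter (fun T : Finset (Sym2 (ZMod n)) => G.IsSpanningForest ↑T)
      = Finset.univ.image (fun e : G.edgeSet => G.edgeFinset.erase ↑e) := by
    ext T
    simp only [Finset.mem_filter, Finset.mem_univ, true_and, Finset.mem_image]
    rw [hG, forest_iff hn]
    constructor
    · rintro ⟨e, heE, hT⟩
      refine ⟨⟨e, heE⟩, ?_⟩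
      apply Finset.coe_injective
      rw [Finset.coe_erase, SimpleGraph.coe_edgeFinset, ← hT]
    · rintro ⟨e, he, rfl⟩
      exact ⟨↑e, e.2, by rw [Finset.coe_erase, SimpleGraph.coe_edgeFinset]⟩
  have hinj : ∀ e ∈ (Finset.univ : Finset G.edgeSet), ∀ e' ∈ (Finset.univ : Finset G.edgeSet),
      G.edgeFinset.erase ↑e = G.edgeFinset.erase ↑e' → e = e' := by
    intro e _ e' _ h
    by_contra hne
    have hmem : (e : Sym2 (ZMod n)) ∈ G.edgeFinset.erase ↑e' := by
      rw [Finset.mem_erase]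
      exact ⟨fun hc => hne (Subtype.ext hc), SimpleGraph.mem_edgeFinset.mpr e.2⟩
    rw [← h] at hmem
    exact (Finset.notMem_erase _ _) hmem
  rw [SimpleGraph.kirchhoff, himg, Finset.sum_image hinj]
  refine Finset.sum_congr rfl (fun e _ => ?_)
  have hiff : ∀ e' : G.edgeSet, ((e' : Sym2 (ZMod n)) ∉ G.edgeFinset.erase ↑e) ↔ e' = e := by
    intro e'
    rw [Finset.mem_erase]
    constructor
    · intro h
      by_contra hne
      exact h ⟨fun hc => hne (Subtype.ext hc), SimpleGraph.mem_edgeFinset.mpr e'.2⟩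
    · rintro rfl ⟨h1, h2⟩
      exact h1 rfl
  simp only [hiff, Finset.filter_eq', Finset.mem_univ, if_true, Finset.prod_singleton]
/-- reindexing the sum-nonzero set -/
def sumSetEquiv {ι ι' : Type*} [Fintype ι] [Fintype ι'] (k : Type*) [Field k] (σ : ι ≃ ι') :
    {t : ι → k | (∑ e, t e) ≠ 0} ≃ {t : ι' → k | (∑ e, t e) ≠ 0} :=
  Equiv.subtypeEquiv (Equiv.arrowCongr σ (Equiv.refl k)) (by
    intro t
    simp only [Set.mem_setOf_eq, Equiv.arrowCongr_apply, Equiv.coe_refl, Function.comp,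
      id_eq]
    rw [Equiv.sum_comp σ.symm (fun e => t e)])

/-- the option-splitting equivalence -/
def sumOptionEquiv {β : Type*} [Fintype β] (k : Type*) [Field k] :
    {t : Option β → k | (∑ e, t e) ≠ 0} ≃ (β → k) × kˣ where
  toFun t := ⟨fun b => t.1 (some b), Units.mk0 (∑ e, t.1 e) t.2⟩
  invFun p := ⟨fun o => Option.rec ((p.2 : k) - ∑ b, p.1 b) p.1 o, by
    show (∑ e : Option β, _) ≠ 0
    rw [Fintype.sum_option]
    simp only
    rw [sub_add_cancel]
    exact p.2.ne_zero⟩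
  left_inv t := by
    apply Subtype.ext
    funext o
    cases o with
    | none =>
      show (∑ e, t.1 e) - ∑ b, t.1 (some b) = t.1 none
      rw [Fintype.sum_option]
      ring
    | some b => rfl
  right_inv p := by
    refine Prod.ext rfl (Units.ext ?_)
    show (∑ e : Option β, _) = (p.2 : k)
    rw [Fintype.sum_option]
    simp only
    rw [sub_add_cancel]

end CycleHelpers

/-- For `n ≥ 3` and the cycle graph `C_n` on `ZMod n`: the spanning
forests of `C_n` are exactly the complements of single edges, so that
`Ψ_{C_n} = ∑_{e ∈ E(C_n)} x_e`; consequently, for any field `k`, the complement of the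
affine graph hypersurface, `{t | ∑_e t_e ≠ 0}`, is in bijection with `k^{n−1} × kˣ`. -/
theorem cycleGraph_kirchhoff (n : ℕ) (hn : 3 ≤ n) [NeZero n] (k : Type*) [Field k] :
    (∀ T : Set (Sym2 (ZMod n)), (cycleGraphZMod n).IsSpanningForest T ↔
        ∃ e ∈ (cycleGraphZMod n).edgeSet, T = (cycleGraphZMod n).edgeSet \ {e}) ∧
    (cycleGraphZMod n).kirchhoff = ∑ e : (cycleGraphZMod n).edgeSet, MvPolynomial.X e ∧
    Nonempty ({t : (cycleGraphZMod n).edgeSet → k | (∑ e, t e) ≠ 0} ≃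
      (Fin (n - 1) → k) × kˣ) := by
  refine ⟨fun T => forest_iff hn T, cyc_kirchhoff hn, ?_⟩
  have e1 : (cycleGraphZMod n).edgeSet ≃ Fin n := Fintype.equivFinOfCardEq (cyc_card hn)
  have e2 : Fin n ≃ Option (Fin (n - 1)) :=
    (finCongr (by omega : n = n - 1 + 1)).trans (finSuccEquiv (n - 1))
  exact ⟨(sumSetEquiv k (e1.trans e2)).trans (sumOptionEquiv k)⟩
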